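/- Let S be a best choice recoloring of G and let v be a vertex of G. If r is the number of steps of S that are saved for v, then |S_{|v}| ≤ 1 − r/2 + ⌈(Σ_{w ∈ N⁺(v)} |S_{|w}|)/2⌉, i.e., 2·|S_{|v}| ≤ 2 − r + 2·⌈m/2⌉ where m = Σ_{w ∈ N⁺(v)} |S_{|w}|. -/

import Mathlib

/-!
Framework for the Best Choice Recoloring Algorithm on a chordal graph with
clique number at most `3`, with `k = 5` colors.

A recoloring sequence is a list of steps, each step `(v, c)` recoloring the
vertex `v` with the color `c`.
-/

variable {V : Type*} [DecidableEq V]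

/-- `σ` is a proper coloring of `G`. -/
def IsProperColoring (G : SimpleGraph V) (σ : V → Fin 5) : Prop :=
  ∀ ⦃x y⦄, G.Adj x y → σ x ≠ σ y

/-- Apply a list of recoloring steps to a coloring. -/
def applySteps (α : V → Fin 5) (S : List (V × Fin 5)) : V → Fin 5 :=
  S.foldl (fun σ s => Function.update σ s.1 s.2) α

/-- The number of steps of `S` recoloring the vertex `v`, i.e. `|S_{|v}|`. -/
def recolCount (S : List (V × Fin 5)) (v : V) : ℕ :=
  (S.filter fun s => decide (s.1 = v)).length

/-- `S_{|X}`: the subsequence of the steps of `S` recoloring vertices of `X`. -/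
noncomputable def restrict (X : Set V) (S : List (V × Fin 5)) : List (V × Fin 5) :=
  S.filter fun s => @decide (s.1 ∈ X) (Classical.propDecidable _)

/-- The position, inside the restricted sequence `S_{|X}`, corresponding to the step
of index `i` of `S` (when that step recolors a vertex of `X`). -/
noncomputable def posIn (X : Set V) (S : List (V × Fin 5)) (i : ℕ) : ℕ :=
  (restrict X (S.take i)).length

/-- The step of index `i` (0-based) of the sequence `S` recolors the vertex `x`. -/
def recolorsAt (S : List (V × Fin 5)) (i : ℕ) (x : V) : Prop :=
  ∃ c : Fin 5, S[i]? = some (x, c)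

/-- A perfect elimination ordering `[v₁, …, vₙ]` witnessing chordality with clique
number at most `3`: each vertex has at most two neighbors appearing later in the
list, and when it has two such neighbors they are adjacent. -/
def IsPEOList (G : SimpleGraph V) : List V → Prop
  | [] => True
  | v :: vs =>
      (¬ ∃ w₁ ∈ vs, ∃ w₂ ∈ vs, ∃ w₃ ∈ vs,
          G.Adj v w₁ ∧ G.Adj v w₂ ∧ G.Adj v w₃ ∧ w₁ ≠ w₂ ∧ w₁ ≠ w₃ ∧ w₂ ≠ w₃) ∧
      (∀ w₁ ∈ vs, ∀ w₂ ∈ vs, G.Adj v w₁ → G.Adj v w₂ → w₁ ≠ w₂ → G.Adj w₁ w₂) ∧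
      IsPEOList G vs

/-- `N⁺(x)`: the out-neighborhood of `x`, i.e. its neighbors appearing later in the
perfect elimination ordering `order`. -/
def NPlus (G : SimpleGraph V) (order : List V) (x : V) : Set V :=
  {y | G.Adj x y ∧ order.idxOf x < order.idxOf y}

/-- `N⁺[x] = N⁺(x) ∪ {x}`: the inclusive out-neighborhood of `x`. -/
def NPlusC (G : SimpleGraph V) (order : List V) (x : V) : Set V :=
  insert x (NPlus G order x)

/-- `c` is a valid color for `u` in the current coloring `σ`: it differs from the
current colors of `u` and of its neighbors among the active vertices `A`. -/
def ValidCol (G : SimpleGraph V) (A : List V) (u : V) (σ : V → Fin 5) (c : Fin 5) : Prop :=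
  c ≠ σ u ∧ ∀ w ∈ A, G.Adj u w → c ≠ σ w

/-- The list of colors assigned to (active) neighbors of `u` by the steps of `L`. -/
noncomputable def nbrColors (G : SimpleGraph V) (A : List V) (u : V)
    (L : List (V × Fin 5)) : List (Fin 5) :=
  (L.filter fun s => @decide (G.Adj u s.1 ∧ s.1 ∈ A) (Classical.propDecidable _)).map
    Prod.snd

/-- `c` is a best choice color for `u` (with target color `bu`), given the current
coloring `σ` and the list `future` of the remaining steps (the current one included):
`c` is valid for `u`, and it is `bu` if `bu` does not appear among the colors assigned
to neighbors of `u` in `future`; otherwise it avoids those colors if some valid color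
does; otherwise it is a valid color whose first occurrence among those colors is
latest. -/
def IsBestChoice (G : SimpleGraph V) (A : List V) (u : V) (bu : Fin 5)
    (σ : V → Fin 5) (future : List (V × Fin 5)) (c : Fin 5) : Prop :=
  ValidCol G A u σ c ∧
    (bu ∉ nbrColors G A u future → c = bu) ∧
    (bu ∈ nbrColors G A u future →
      ((∃ c', ValidCol G A u σ c' ∧ c' ∉ nbrColors G A u future) →
          c ∉ nbrColors G A u future) ∧
      ((∀ c', ValidCol G A u σ c' → c' ∈ nbrColors G A u future) →
          ∀ c', ValidCol G A u σ c' →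
            (nbrColors G A u future).idxOf c' ≤ (nbrColors G A u future).idxOf c))

/-- `LBC G A u bu σ S' S`: the sequence `S` is obtained from the sequence `S'`
(a recoloring sequence on the active vertices `A`, starting from the coloring `σ`)
by the Local Best Choice for the vertex `u` with target color `bu`: just before each
step of `S'` recoloring a neighbor of `u` with the current color of `u`, a step
recoloring `u` with a best choice color is inserted, and at the very end `u` is
recolored to `bu` if needed. -/
inductive LBC (G : SimpleGraph V) (A : List V) (u : V) (bu : Fin 5) :
    (V → Fin 5) → List (V × Fin 5) → List (V × Fin 5) → Prop
  | done {σ : V → Fin 5} (h : σ u = bu) : LBC G A u bu σ [] []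
  | final {σ : V → Fin 5} (h : σ u ≠ bu) : LBC G A u bu σ [] [(u, bu)]
  | skip {σ : V → Fin 5} {w : V} {c : Fin 5} {rest S : List (V × Fin 5)}
      (h : ¬(G.Adj u w ∧ w ∈ A ∧ c = σ u))
      (ih : LBC G A u bu (Function.update σ w c) rest S) :
      LBC G A u bu σ ((w, c) :: rest) ((w, c) :: S)
  | insert {σ : V → Fin 5} {w : V} {c : Fin 5} {rest S : List (V × Fin 5)} {c' : Fin 5}
      (h : G.Adj u w ∧ w ∈ A ∧ c = σ u)
      (hbc : IsBestChoice G A u bu σ ((w, c) :: rest) c')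
      (ih : LBC G A u bu (Function.update (Function.update σ u c') w c) rest S) :
      LBC G A u bu σ ((w, c) :: rest) ((u, c') :: (w, c) :: S)

/-- `BCR G α β order S`: `S` is a best choice recoloring of (the subgraph of `G`
induced by the vertices of) `order` from `α` to `β`, obtained by applying the Local
Best Choice successively to the vertices of `order` from the last one to the first
one. -/
inductive BCR (G : SimpleGraph V) (α β : V → Fin 5) : List V → List (V × Fin 5) → Prop
  | nil : BCR G α β [] []
  | cons {v : V} {vs : List V} {S' S : List (V × Fin 5)}
      (hS' : BCR G α β vs S') (h : LBC G vs v (β v) α S' S) :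
      BCR G α β (v :: vs) S

/-- The step of (0-based) index `p` of the restricted sequence `R = S_{|N⁺[v]}` is
saved for `v`: it recolors a vertex of `N⁺(v)` and either `v` is recolored at no step
up to and including it, or `v` is recolored at no step from it on, or neither of the
two steps preceding it in `R` recolors `v`. -/
def SavedForR (G : SimpleGraph V) (order : List V) (v : V)
    (R : List (V × Fin 5)) (p : ℕ) : Prop :=
  (∃ w ∈ NPlus G order v, recolorsAt R p w) ∧
    ((∀ j ≤ p, ¬ recolorsAt R j v) ∨
     (∀ j, p ≤ j → ¬ recolorsAt R j v) ∨
     (∀ q, p - 2 ≤ q → q < p → ¬ recolorsAt R q v))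

/-- The step of index `i` of `S` is saved for the vertex `v`. -/
def SavedFor (G : SimpleGraph V) (order : List V) (S : List (V × Fin 5)) (v : V)
    (i : ℕ) : Prop :=
  (∃ w ∈ NPlus G order v, recolorsAt S i w) ∧
    SavedForR G order v (restrict (NPlusC G order v) S) (posIn (NPlusC G order v) S i)


/-! ### Auxiliary lemmas -/

section Aux

variable {G : SimpleGraph V}

/-- The color of `x` after applying `L`, as the last color assigned to `x` (or the
initial color). -/
noncomputable def lastColor (τ : V → Fin 5) (L : List (V × Fin 5)) (x : V) : Fin 5 :=
  ((L.filter fun s => decide (s.1 = x)).map Prod.snd).getLastD (τ x)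

lemma lastColor_cons (τ : V → Fin 5) (w : V) (c : Fin 5) (L : List (V × Fin 5)) (x : V) :
    lastColor τ ((w, c) :: L) x = lastColor (Function.update τ w c) L x := by
  unfold lastColor
  by_cases h : w = x
  · subst h
    rw [show List.filter (fun s => decide (s.1 = w)) ((w, c) :: L)
        = (w, c) :: List.filter (fun s => decide (s.1 = w)) L by simp [List.filter_cons]]
    rw [List.map_cons, List.getLastD_cons, Function.update_self]
  · rw [show List.filter (fun s => decide (s.1 = x)) ((w, c) :: L)
        = List.filter (fun s => decide (s.1 = x)) L by simp [List.filter_cons, h]]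
    rw [Function.update_of_ne (Ne.symm h)]

lemma lastColor_congr {τ τ' : V → Fin 5} {L : List (V × Fin 5)} {x : V}
    (h : τ x = τ' x) : lastColor τ L x = lastColor τ' L x := by
  unfold lastColor; rw [h]

lemma applySteps_eq_lastColor (τ : V → Fin 5) (L : List (V × Fin 5)) (x : V) :
    applySteps τ L x = lastColor τ L x := by
  induction L generalizing τ with
  | nil => simp [applySteps, lastColor]
  | cons s L ih =>
    obtain ⟨w, c⟩ := s
    rw [show applySteps τ ((w, c) :: L) = applySteps (Function.update τ w c) L from rfl,
      lastColor_cons]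
    exact ih _

lemma LBC_filter {A : List V} {u : V} {bu : Fin 5} {σ : V → Fin 5}
    {S' S : List (V × Fin 5)} (h : LBC G A u bu σ S' S)
    (p : V × Fin 5 → Bool) (hp : ∀ c : Fin 5, p (u, c) = false) :
    S.filter p = S'.filter p := by
  induction h with
  | done h => rfl
  | final h => simp [List.filter_cons, hp]
  | skip h ih ih2 => simp only [List.filter_cons, ih2]
  | insert h hbc ih ih2 => simp only [List.filter_cons, hp, ih2]; rfl

lemma LBC_applySteps_self {A : List V} {u : V} {bu : Fin 5} {σ : V → Fin 5}
    {S' S : List (V × Fin 5)} (h : LBC G A u bu σ S' S) :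
    applySteps σ S u = bu := by
  induction h with
  | done h => exact h
  | final h => simp [applySteps]
  | skip h ih ih2 => exact ih2
  | insert h hbc ih ih2 => exact ih2

lemma LBC_steps {A : List V} {u : V} {bu : Fin 5} {σ : V → Fin 5}
    {S' S : List (V × Fin 5)} (h : LBC G A u bu σ S' S) :
    ∀ s ∈ S, s.1 = u ∨ s ∈ S' := by
  induction h with
  | done h => simp
  | final h => simp
  | skip h ih ih2 =>
    intro s hs
    rcases List.mem_cons.1 hs with h1 | h1
    · exact Or.inr (by simp [h1])
    · rcases ih2 s h1 with h2 | h2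
      · exact Or.inl h2
      · exact Or.inr (List.mem_cons_of_mem _ h2)
  | insert h hbc ih ih2 =>
    intro s hs
    rcases List.mem_cons.1 hs with h1 | h1
    · exact Or.inl (by simp [h1])
    · rcases List.mem_cons.1 h1 with h2 | h2
      · exact Or.inr (by simp [h2])
      · rcases ih2 s h2 with h3 | h3
        · exact Or.inl h3
        · exact Or.inr (List.mem_cons_of_mem _ h3)

lemma BCR_steps {α β : V → Fin 5} {vs : List V} {S : List (V × Fin 5)}
    (h : BCR G α β vs S) : ∀ s ∈ S, s.1 ∈ vs := by
  induction h with
  | nil => simp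
  | @cons v vs S' S hS' hL ih =>
    intro s hs
    rcases LBC_steps hL s hs with h1 | h1
    · simp [h1]
    · exact List.mem_cons_of_mem _ (ih s h1)

lemma BCR_applySteps {α β : V → Fin 5} {vs : List V} {S : List (V × Fin 5)}
    (h : BCR G α β vs S) (hnd : vs.Nodup) : ∀ u ∈ vs, applySteps α S u = β u := by
  induction h with
  | nil => simp
  | @cons v vs S' S hS' hL ih =>
    rcases List.nodup_cons.1 hnd with ⟨hv, hnd'⟩
    intro u hu
    rcases List.mem_cons.1 hu with h1 | h1
    · subst h1; exact LBC_applySteps_self hL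
    · have hne : u ≠ v := fun he => hv (he ▸ h1)
      rw [applySteps_eq_lastColor]
      unfold lastColor
      rw [LBC_filter hL _ (fun c => by simp [Ne.symm hne])]
      rw [← lastColor, ← applySteps_eq_lastColor]
      exact ih hnd' u h1

end Aux

section Aux2
set_option linter.unusedSectionVars false

variable {G : SimpleGraph V}

lemma restrict_cons_mem {X : Set V} {s : V × Fin 5} (L : List (V × Fin 5))
    (h : s.1 ∈ X) : restrict X (s :: L) = s :: restrict X L := by
  unfold restrict
  rw [List.filter_cons, if_pos (@decide_eq_true _ (Classical.propDecidable _) h)]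

lemma restrict_cons_not_mem {X : Set V} {s : V × Fin 5} (L : List (V × Fin 5))
    (h : s.1 ∉ X) : restrict X (s :: L) = restrict X L := by
  unfold restrict
  rw [List.filter_cons, if_neg (by simp only [Bool.not_eq_true, @decide_eq_false_iff_not _ (Classical.propDecidable _)]; exact h)]

lemma restrict_append (X : Set V) (L L' : List (V × Fin 5)) :
    restrict X (L ++ L') = restrict X L ++ restrict X L' := by
  unfold restrict; exact List.filter_append _ _

lemma mem_restrict {X : Set V} {s : V × Fin 5} {L : List (V × Fin 5)}
    (h : s ∈ restrict X L) : s ∈ L ∧ s.1 ∈ X := by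
  unfold restrict at h
  rcases List.mem_filter.1 h with ⟨h1, h2⟩
  exact ⟨h1, @of_decide_eq_true _ (Classical.propDecidable _) h2⟩

lemma restrict_eq_nil_iff {X : Set V} {L : List (V × Fin 5)} :
    restrict X L = [] ↔ ∀ s ∈ L, s.1 ∉ X := by
  unfold restrict
  rw [List.filter_eq_nil_iff]
  constructor
  · intro h s hs hx
    exact absurd (@decide_eq_true _ (Classical.propDecidable _) hx) (by simpa using h s hs)
  · intro h s hs
    simp only [Bool.not_eq_true, @decide_eq_false_iff_not _ (Classical.propDecidable _)]
    exact h s hs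

/-- "No `v`-step within distance `2` after a `v`-step" property. -/
def C1v (v : V) (R : List (V × Fin 5)) : Prop :=
  ∀ q (c₀ : Fin 5), R[q]? = some (v, c₀) →
    (∀ c₁ : Fin 5, R[q + 1]? ≠ some (v, c₁)) ∧ (∀ c₁ : Fin 5, R[q + 2]? ≠ some (v, c₁))

lemma C1v_nil {v : V} : C1v v ([] : List (V × Fin 5)) := by
  intro q c₀ h; simp at h

lemma C1v_singleton {v : V} {c : Fin 5} : C1v v [(v, c)] := by
  intro q c₀ h
  constructor <;> intro c₁ <;> simp [List.getElem?_cons]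

lemma C1v_cons_nonv {v : V} {s : V × Fin 5} {R : List (V × Fin 5)}
    (hs : s.1 ≠ v) (h : C1v v R) : C1v v (s :: R) := by
  intro q c₀ hq
  cases q with
  | zero =>
    exfalso; rw [List.getElem?_cons_zero] at hq
    exact hs (by injection hq with h'; rw [h'])
  | succ k =>
    rw [List.getElem?_cons_succ] at hq
    obtain ⟨h1, h2⟩ := h k c₀ hq
    exact ⟨by simpa using h1, by simpa using h2⟩

lemma C1v_cons_v {v : V} {c : Fin 5} {R : List (V × Fin 5)}
    (h0 : ∀ c₁ : Fin 5, R[0]? ≠ some (v, c₁)) (h1 : ∀ c₁ : Fin 5, R[1]? ≠ some (v, c₁))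
    (h : C1v v R) : C1v v ((v, c) :: R) := by
  intro q c₀ hq
  cases q with
  | zero => exact ⟨by simpa using h0, by simpa using h1⟩
  | succ k =>
    rw [List.getElem?_cons_succ] at hq
    obtain ⟨ha, hb⟩ := h k c₀ hq
    exact ⟨by simpa using ha, by simpa using hb⟩

lemma C1v_sep {v : V} {R : List (V × Fin 5)} (h : C1v v R) {q q' : ℕ}
    (hq : recolorsAt R q v) (hq' : recolorsAt R q' v) (hlt : q < q') : q + 3 ≤ q' := by
  obtain ⟨c₀, hc₀⟩ := hq
  obtain ⟨c₁, hc₁⟩ := hq'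
  obtain ⟨h1, h2⟩ := h q c₀ hc₀
  have hne1 : q' ≠ q + 1 := fun he => h1 c₁ (he ▸ hc₁)
  have hne2 : q' ≠ q + 2 := fun he => h2 c₁ (he ▸ hc₁)
  omega

/-- Two distinct colors avoiding three given colors exist in `Fin 5`. -/
lemma fin5_two_avoid (a b e : Fin 5) :
    ∃ d₁ d₂ : Fin 5, d₁ ≠ d₂ ∧ d₁ ≠ a ∧ d₁ ≠ b ∧ d₁ ≠ e ∧ d₂ ≠ a ∧ d₂ ≠ b ∧ d₂ ≠ e := by
  revert a b e; decide

lemma IsPEOList_suffix {l1 l2 : List V} (h : IsPEOList G (l1 ++ l2)) :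
    IsPEOList G l2 := by
  induction l1 with
  | nil => exact h
  | cons a l ih => exact ih h.2.2

lemma cover_of_no3 {v : V} {A : List V}
    (no3 : ¬ ∃ w₁ ∈ A, ∃ w₂ ∈ A, ∃ w₃ ∈ A,
      G.Adj v w₁ ∧ G.Adj v w₂ ∧ G.Adj v w₃ ∧ w₁ ≠ w₂ ∧ w₁ ≠ w₃ ∧ w₂ ≠ w₃) :
    ∃ x₁ x₂ : V, ∀ x ∈ A, G.Adj v x → x = x₁ ∨ x = x₂ := by
  by_cases h1 : ∃ x ∈ A, G.Adj v x
  · obtain ⟨x₁, hx₁, ha₁⟩ := h1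
    by_cases h2 : ∃ x ∈ A, G.Adj v x ∧ x ≠ x₁
    · obtain ⟨x₂, hx₂, ha₂, hne⟩ := h2
      refine ⟨x₁, x₂, fun x hx hax => ?_⟩
      by_contra hcon
      push_neg at hcon
      exact no3 ⟨x₁, hx₁, x₂, hx₂, x, hx, ha₁, ha₂, hax, Ne.symm hne, Ne.symm hcon.1,
        Ne.symm hcon.2⟩
    · push_neg at h2
      exact ⟨x₁, x₁, fun x hx hax => Or.inl (h2 x hx hax)⟩
  · push_neg at h1
    exact ⟨v, v, fun x hx hax => absurd hax (h1 x hx)⟩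

end Aux2

section Aux3
set_option linter.unusedSectionVars false
set_option maxHeartbeats 1000000

variable {G : SimpleGraph V}

lemma nbrColors_cons_pos {A : List V} {v : V} {s : V × Fin 5} {L : List (V × Fin 5)}
    (h : G.Adj v s.1 ∧ s.1 ∈ A) :
    nbrColors G A v (s :: L) = s.2 :: nbrColors G A v L := by
  unfold nbrColors
  rw [List.filter_cons, if_pos (@decide_eq_true _ (Classical.propDecidable _) h)]
  rfl

lemma nbr_eq_restrict {order A : List V} {v : V} (L : List (V × Fin 5))
    (h1 : ∀ s ∈ L, s.1 ≠ v) (h2' : ∀ s ∈ L, s.1 ∈ A)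
    (h2 : ∀ x ∈ A, G.Adj v x → x ∈ NPlus G order v) :
    nbrColors G A v L = (restrict (NPlusC G order v) L).map Prod.snd := by
  unfold nbrColors restrict
  congr 1
  apply List.filter_congr
  intro s hs
  refine decide_eq_decide.2 ?_
  constructor
  · rintro ⟨hadj, hA⟩
    exact Set.mem_insert_of_mem _ (h2 _ hA hadj)
  · intro hmem
    rcases Set.mem_insert_iff.1 hmem with he | hN
    · exact absurd he (h1 s hs)
    · exact ⟨hN.1, h2' s hs⟩

lemma first_insert {order A : List V} {v : V} {bu : Fin 5}
    (h2 : ∀ x ∈ A, G.Adj v x → x ∈ NPlus G order v)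
    {σ : V → Fin 5} {rest S_tail : List (V × Fin 5)}
    (h : LBC G A v bu σ rest S_tail) :
    (∀ s ∈ rest, s.1 ≠ v) →
    ∀ c'' : Fin 5, (restrict (NPlusC G order v) S_tail).head? = some (v, c'') →
    (restrict (NPlusC G order v) rest = [] ∧ σ v ≠ bu) ∨
    (∃ w₂ c₂, (restrict (NPlusC G order v) rest).head? = some (w₂, c₂) ∧ c₂ = σ v) := by
  induction h with
  | done hσ => intro _ c'' hh; simp [restrict] at hh
  | @final σ hσ =>
    intro _ c'' hh
    exact Or.inl ⟨rfl, hσ⟩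
  | @skip σ w c rest S hns ih ih2 =>
    intro h1 c'' hh
    have hwv : w ≠ v := h1 (w, c) (List.mem_cons_self)
    by_cases hNC : w ∈ NPlusC G order v
    · rw [restrict_cons_mem (s := (w, c)) _ hNC, List.head?_cons] at hh
      exact absurd (congrArg (fun o => Prod.fst <$> o) hh) (by simp [hwv])
    · rw [restrict_cons_not_mem (s := (w, c)) _ hNC] at hh
      rcases ih2 (fun s hs => h1 s (List.mem_cons_of_mem _ hs)) c'' hh with
        ⟨he, hne⟩ | ⟨w₂, c₂, hh2, hc⟩
      · refine Or.inl ⟨by rw [restrict_cons_not_mem (s := (w, c)) _ hNC]; exact he, ?_⟩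
        rwa [Function.update_of_ne (Ne.symm hwv)] at hne
      · refine Or.inr ⟨w₂, c₂, ?_, ?_⟩
        · rw [restrict_cons_not_mem (s := (w, c)) _ hNC]; exact hh2
        · rwa [Function.update_of_ne (Ne.symm hwv)] at hc
  | @insert σ w c rest S c' htr hbc ih ih2 =>
    intro h1 c'' hh
    have hwNC : w ∈ NPlusC G order v := Set.mem_insert_of_mem _ (h2 w htr.2.1 htr.1)
    refine Or.inr ⟨w, c, ?_, htr.2.2⟩
    rw [restrict_cons_mem (s := (w, c)) _ hwNC, List.head?_cons]

lemma main_C1 {order A : List V} {v : V} {bu : Fin 5}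
    (h2 : ∀ x ∈ A, G.Adj v x → x ∈ NPlus G order v)
    (h3 : ∃ x₁ x₂ : V, ∀ x ∈ A, G.Adj v x → x = x₁ ∨ x = x₂)
    {σ : V → Fin 5} {S' S : List (V × Fin 5)}
    (h : LBC G A v bu σ S' S) :
    (∀ s ∈ S', s.1 ≠ v) → (∀ s ∈ S', s.1 ∈ A) →
    (∀ w, G.Adj v w → w ∈ A → lastColor σ S' w ≠ bu) →
    C1v v (restrict (NPlusC G order v) S) := by
  induction h with
  | done hσ => exact fun _ _ _ => C1v_nil
  | @final σ hσ =>
    intro _ _ _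
    have hm : ((v, bu) : V × Fin 5).1 ∈ NPlusC G order v := Set.mem_insert _ _
    rw [restrict_cons_mem (s := (v, bu)) _ hm]
    exact C1v_singleton
  | @skip σ w c rest S hns ih ih2 =>
    intro h1 h2' h4
    have hwv : w ≠ v := h1 (w, c) (List.mem_cons_self)
    have hC := ih2 (fun s hs => h1 s (List.mem_cons_of_mem _ hs))
      (fun s hs => h2' s (List.mem_cons_of_mem _ hs))
      (fun w' ha hA => by
        have := h4 w' ha hA; rwa [lastColor_cons] at this)
    by_cases hNC : w ∈ NPlusC G order v
    · rw [restrict_cons_mem (s := (w, c)) _ hNC]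
      exact C1v_cons_nonv hwv hC
    · rwa [restrict_cons_not_mem (s := (w, c)) _ hNC]
  | @insert σ w c rest S c' htr hbc ih ih2 =>
    intro h1 h2' h4
    obtain ⟨hadj, hwA, hc⟩ := htr
    have hwv : w ≠ v := h1 (w, c) (List.mem_cons_self)
    have hvNC : v ∈ NPlusC G order v := Set.mem_insert _ _
    have hwN : w ∈ NPlus G order v := h2 w hwA hadj
    have hwNC : w ∈ NPlusC G order v := Set.mem_insert_of_mem _ hwN
    have h1' : ∀ s ∈ rest, s.1 ≠ v := fun s hs => h1 s (List.mem_cons_of_mem _ hs)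
    have h2'' : ∀ s ∈ rest, s.1 ∈ A := fun s hs => h2' s (List.mem_cons_of_mem _ hs)
    have hσ₂v : (Function.update (Function.update σ v c') w c) v = c' := by
      rw [Function.update_of_ne (Ne.symm hwv), Function.update_self]
    have h4' : ∀ w', G.Adj v w' → w' ∈ A →
        lastColor (Function.update (Function.update σ v c') w c) rest w' ≠ bu := by
      intro w' ha hA
      have hvw' : v ≠ w' := G.ne_of_adj ha
      have hh := h4 w' ha hA
      rw [lastColor_cons] at hh
      have heq : lastColor (Function.update (Function.update σ v c') w c) rest w' =
          lastColor (Function.update σ w c) rest w' := by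
        apply lastColor_congr
        by_cases hww : w' = w
        · subst hww; rw [Function.update_self, Function.update_self]
        · rw [Function.update_of_ne hww, Function.update_of_ne hww,
            Function.update_of_ne (Ne.symm hvw')]
      rw [heq]; exact hh
    have hC := ih2 h1' h2'' h4'
    have hval : ∀ d : Fin 5, d ≠ σ v → (∀ x ∈ A, G.Adj v x → d ≠ σ x) →
        ValidCol G A v σ d := fun d hd hx => ⟨hd, fun w' hw' haw' => hx w' hw' haw'⟩
    have hhead : ∀ c₁ : Fin 5, (restrict (NPlusC G order v) S)[0]? ≠ some (v, c₁) := by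
      intro c₁ hcon
      have hh : (restrict (NPlusC G order v) S).head? = some (v, c₁) := by
        rw [List.head?_eq_getElem?]; exact hcon
      rcases first_insert h2 ih h1' c₁ hh with ⟨hre, hne⟩ | ⟨w₂, c₂, hh2, hc₂⟩
      · -- final-step case: bu = c, but the last color of w is c and differs from bu
        rw [hσ₂v] at hne
        have hnr : nbrColors G A v rest = [] := by
          rw [nbr_eq_restrict (order := order) rest h1' h2'' h2, hre]; rfl
        have hnbr : nbrColors G A v ((w, c) :: rest) = [c] := by
          rw [nbrColors_cons_pos ⟨hadj, hwA⟩, hnr]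
        have hbu : bu ∈ nbrColors G A v ((w, c) :: rest) := by
          by_contra hbu'
          exact hne (hbc.2.1 hbu')
        rw [hnbr, List.mem_singleton] at hbu
        have h4w := h4 w hadj hwA
        rw [lastColor_cons] at h4w
        have hlc : lastColor (Function.update σ w c) rest w = c := by
          unfold lastColor
          have hfe : rest.filter (fun s => decide (s.1 = w)) = [] := by
            rw [List.filter_eq_nil_iff]
            intro s hs
            simp only [decide_eq_true_eq]
            intro he
            exact (restrict_eq_nil_iff.1 hre s hs) (he ▸ hwNC)
          rw [hfe]
          simp [Function.update_self]
        exact h4w (by rw [hlc, ← hbu])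
      · -- next-insertion case: best choice contradiction
        rw [hσ₂v] at hc₂
        obtain ⟨t, ht⟩ : ∃ t, restrict (NPlusC G order v) rest = (w₂, c₂) :: t := by
          rcases he : restrict (NPlusC G order v) rest with _ | ⟨a, t⟩
          · rw [he] at hh2; simp at hh2
          · rw [he, List.head?_cons] at hh2
            exact ⟨t, by rw [(Option.some_injective _ hh2)]⟩
        have hnbr : nbrColors G A v ((w, c) :: rest) = c :: c₂ :: t.map Prod.snd := by
          rw [nbrColors_cons_pos ⟨hadj, hwA⟩,
            nbr_eq_restrict (order := order) rest h1' h2'' h2, ht, List.map_cons]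
        have hc'ne : c' ≠ c := fun he => hbc.1.1 (he.trans hc)
        have hc'mem : c' ∈ nbrColors G A v ((w, c) :: rest) := by
          rw [hnbr, hc₂]; simp
        have hbu : bu ∈ nbrColors G A v ((w, c) :: rest) := by
          by_contra hb
          exact hb (hbc.2.1 hb ▸ hc'mem)
        obtain ⟨clA, clB⟩ := hbc.2.2 hbu
        have hall : ∀ d, ValidCol G A v σ d → d ∈ nbrColors G A v ((w, c) :: rest) := by
          by_contra hx
          push_neg at hx
          obtain ⟨d, hd, hdn⟩ := hx
          exact clA ⟨d, hd, hdn⟩ hc'mem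
        have hIdx := clB hall
        obtain ⟨x₁, x₂, hcov⟩ := h3
        obtain ⟨d₁, d₂, hd12, h1a, h1b, h1c, h2a, h2b, h2c⟩ :=
          fin5_two_avoid (σ v) (σ x₁) (σ x₂)
        have hv₁ : ValidCol G A v σ d₁ := hval d₁ h1a (fun x hx hax => by
          rcases hcov x hx hax with he | he <;> subst he <;> assumption)
        have hv₂ : ValidCol G A v σ d₂ := hval d₂ h2a (fun x hx hax => by
          rcases hcov x hx hax with he | he <;> subst he <;> assumption)
        have hidxc' : (nbrColors G A v ((w, c) :: rest)).idxOf c' = 1 := by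
          rw [hnbr, hc₂, List.idxOf_cons_ne _ (Ne.symm hc'ne), List.idxOf_cons_self]
        have key : ∀ d : Fin 5, ValidCol G A v σ d → d = c' := by
          intro d hd
          have hle := hIdx d hd
          rw [hidxc'] at hle
          have hdc : d ≠ c := fun he => hd.1 (he.trans hc)
          rw [hnbr, List.idxOf_cons_ne _ (Ne.symm hdc)] at hle
          have h0 : (c₂ :: t.map Prod.snd).idxOf d = 0 := by omega
          by_contra hne
          rw [List.idxOf_cons_ne _ (show c₂ ≠ d from by
            rw [hc₂]; exact fun he => hne he.symm)] at h0
          exact absurd h0 (Nat.succ_ne_zero _)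
        exact hd12 ((key d₁ hv₁).trans (key d₂ hv₂).symm)
    rw [restrict_cons_mem (s := (v, c')) _ hvNC, restrict_cons_mem (s := (w, c)) _ hwNC]
    refine C1v_cons_v ?_ ?_ (C1v_cons_nonv hwv hC)
    · intro c₁ hcon
      rw [List.getElem?_cons_zero] at hcon
      exact hwv (congrArg Prod.fst (Option.some_injective _ hcon))
    · intro c₁
      rw [List.getElem?_cons_succ]
      exact hhead c₁
end Aux3

section Aux4
set_option linter.unusedSectionVars false
set_option maxHeartbeats 1000000

/-- `Finset.filter` with a fixed classical decidability instance. -/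
noncomputable def fil (P : ℕ → Prop) (s : Finset ℕ) : Finset ℕ :=
  @Finset.filter ℕ P (fun i => Classical.propDecidable _) s

lemma mem_fil {P : ℕ → Prop} {s : Finset ℕ} {i : ℕ} : i ∈ fil P s ↔ i ∈ s ∧ P i :=
  @Finset.mem_filter ℕ P (fun _ => Classical.propDecidable _) s i

lemma fil_subset {P : ℕ → Prop} {s : Finset ℕ} : fil P s ⊆ s :=
  @Finset.filter_subset ℕ P (fun _ => Classical.propDecidable _) s

lemma fil_insert_pos {P : ℕ → Prop} {s : Finset ℕ} {n : ℕ} (h : P n) :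
    fil P (insert n s) = insert n (fil P s) := by
  ext i
  simp only [mem_fil, Finset.mem_insert]
  constructor
  · rintro ⟨h1 | h1, h2⟩
    · exact Or.inl h1
    · exact Or.inr ⟨h1, h2⟩
  · rintro (h1 | ⟨h1, h2⟩)
    · exact ⟨Or.inl h1, h1 ▸ h⟩
    · exact ⟨Or.inr h1, h2⟩

lemma fil_insert_neg {P : ℕ → Prop} {s : Finset ℕ} {n : ℕ} (h : ¬ P n) :
    fil P (insert n s) = fil P s := by
  ext i
  simp only [mem_fil, Finset.mem_insert]
  constructor
  · rintro ⟨h1 | h1, h2⟩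
    · exact absurd (h1 ▸ h2) h
    · exact ⟨h1, h2⟩
  · rintro ⟨h1, h2⟩
    exact ⟨Or.inr h1, h2⟩

lemma fil_congr {P Q : ℕ → Prop} {s : Finset ℕ} (h : ∀ i ∈ s, P i ↔ Q i) :
    fil P s = fil Q s := by
  ext i
  simp only [mem_fil]
  exact ⟨fun ⟨h1, h2⟩ => ⟨h1, (h i h1).1 h2⟩, fun ⟨h1, h2⟩ => ⟨h1, (h i h1).2 h2⟩⟩

lemma length_filter_eq_card (l : List (V × Fin 5)) (p : V × Fin 5 → Bool) :
    (l.filter p).length =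
      (fil (fun i => ∃ s, l[i]? = some s ∧ p s = true) (Finset.range l.length)).card := by
  induction l using List.reverseRecOn with
  | nil => simp [fil]
  | append_singleton l a ih =>
    rw [List.filter_append, List.length_append, List.length_append]
    have hn : l.length ∉ Finset.range l.length := by simp
    have hcongr : fil (fun i => ∃ s, (l ++ [a])[i]? = some s ∧ p s = true)
          (Finset.range l.length) =
        fil (fun i => ∃ s, l[i]? = some s ∧ p s = true) (Finset.range l.length) := by
      apply fil_congr
      intro i hi
      rw [List.getElem?_append_left (by simpa using hi)]
    have hlast : (l ++ [a])[l.length]? = some a := by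
      rw [List.getElem?_append_right (le_refl _)]
      simp
    simp only [List.length_singleton]
    rw [Finset.range_add_one]
    by_cases hpa : p a = true
    · rw [fil_insert_pos ⟨a, hlast, hpa⟩,
        Finset.card_insert_of_notMem (fun hx => hn (fil_subset hx)), hcongr, ← ih]
      simp [hpa]
    · rw [fil_insert_neg (by rintro ⟨s, hs, hps⟩; rw [hlast] at hs; cases hs; exact hpa hps),
        hcongr, ← ih]
      simp [List.filter_cons, hpa]

lemma posIn_lt {X : Set V} {S : List (V × Fin 5)} {i j : ℕ} (hij : i < j)
    {s : V × Fin 5} (hs : S[i]? = some s) (hX : s.1 ∈ X) :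
    posIn X S i < posIn X S j := by
  unfold posIn
  have h1 : S.take (i + 1) = S.take i ++ [s] := by
    rw [List.take_succ, hs]; rfl
  have h2 : (restrict X (S.take i)).length + 1 ≤ (restrict X (S.take (i + 1))).length := by
    rw [h1, restrict_append, restrict_cons_mem (s := s) _ hX]
    simp
  calc (restrict X (S.take i)).length < (restrict X (S.take (i + 1))).length := by omega
    _ ≤ (restrict X (S.take j)).length := by
        have heq : S.take j = S.take (i + 1) ++ (S.drop (i + 1)).take (j - (i + 1)) := by
          rw [← List.take_add]
          congr 1
          omega
        rw [heq, restrict_append, List.length_append]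
        omega

end Aux4

section Aux5
set_option linter.unusedSectionVars false
set_option maxHeartbeats 1000000

lemma recolorsAt_lt {R : List (V × Fin 5)} {q : ℕ} {x : V} (h : recolorsAt R q x) :
    q < R.length := by
  obtain ⟨c, hc⟩ := h
  by_contra hcon
  rw [List.getElem?_eq_none (by omega)] at hc
  exact nomatch hc

lemma count_core (G : SimpleGraph V) (order : List V) (v : V) {R : List (V × Fin 5)}
    (hC1 : C1v v R) :
    {p : ℕ | SavedForR G order v R p}.ncard
      + 2 * (R.filter (fun s => decide (s.1 = v))).length
      ≤ (R.filter (fun s => decide (s.1 ≠ v))).length + 2 := by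
  set len := R.length with hlen
  set Vidx : Finset ℕ := fil (fun q => recolorsAt R q v) (Finset.range len) with hVidx
  set NV : Finset ℕ := fil (fun p => ∃ s, R[p]? = some s ∧ s.1 ≠ v) (Finset.range len)
    with hNV
  have hVmem : ∀ {q : ℕ}, q ∈ Vidx ↔ recolorsAt R q v := by
    intro q
    rw [hVidx, mem_fil, Finset.mem_range]
    exact ⟨fun h => h.2, fun h => ⟨recolorsAt_lt h, h⟩⟩
  have hNVmem : ∀ {p : ℕ}, p ∈ NV ↔ ∃ s, R[p]? = some s ∧ s.1 ≠ v := by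
    intro p
    rw [hNV, mem_fil, Finset.mem_range]
    refine ⟨fun h => h.2, fun h => ⟨?_, h⟩⟩
    obtain ⟨s, hs, _⟩ := h
    by_contra hcon
    rw [List.getElem?_eq_none (by omega)] at hs
    exact nomatch hs
  have hc : (R.filter (fun s => decide (s.1 = v))).length = Vidx.card := by
    rw [length_filter_eq_card]
    congr 1
    apply fil_congr
    intro i _
    unfold recolorsAt
    constructor
    · rintro ⟨⟨w, cw⟩, hs, hd⟩
      have : w = v := by simpa using hd
      exact ⟨cw, by rw [hs, this]⟩
    · rintro ⟨c₀, hs⟩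
      exact ⟨(v, c₀), hs, by simp⟩
  have hm : (R.filter (fun s => decide (s.1 ≠ v))).length = NV.card := by
    rw [length_filter_eq_card]
    congr 1
    apply fil_congr
    intro i _
    constructor
    · rintro ⟨s, hs, hd⟩
      exact ⟨s, hs, by simpa using hd⟩
    · rintro ⟨s, hs, hd⟩
      exact ⟨s, hs, by simpa using hd⟩
  set Q : Finset ℕ := fil (fun q => ∃ q' ∈ Vidx, q < q') Vidx with hQdef
  have hQV : Q ⊆ Vidx := fil_subset
  have hQc : Vidx.card ≤ Q.card + 1 := by
    rcases Finset.eq_empty_or_nonempty Vidx with he | hne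
    · rw [he]; simp
    · set M := Vidx.max' hne with hM
      have hQeq : Q = Vidx.erase M := by
        ext q
        rw [hQdef, mem_fil, Finset.mem_erase]
        constructor
        · rintro ⟨hq, q', hq', hlt⟩
          exact ⟨by have := Finset.le_max' Vidx q' hq'; omega, hq⟩
        · rintro ⟨hne', hq⟩
          have := Finset.le_max' Vidx q hq
          exact ⟨hq, M, Vidx.max'_mem hne, by omega⟩
      rw [hQeq, Finset.card_erase_of_mem (Vidx.max'_mem hne)]
      have : 1 ≤ Vidx.card := Finset.card_pos.2 hne
      omega
  set Bad : Finset ℕ := Q.biUnion (fun q => {q + 1, q + 2}) with hBad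
  have hsep : ∀ {q q' : ℕ}, q ∈ Vidx → q' ∈ Vidx → q < q' → q + 3 ≤ q' :=
    fun hq hq' hlt => C1v_sep hC1 (hVmem.1 hq) (hVmem.1 hq') hlt
  have hBadcard : Bad.card = 2 * Q.card := by
    rw [hBad, Finset.card_biUnion]
    · rw [Finset.sum_congr rfl (fun q _ => show ({q + 1, q + 2} : Finset ℕ).card = 2 by
        rw [Finset.card_insert_of_notMem (by simp), Finset.card_singleton])]
      rw [Finset.sum_const, smul_eq_mul]
      ring
    · intro q1 hq1 q2 hq2 hne
      have h1 := hQV hq1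
      have h2 := hQV hq2
      rw [Function.onFun_apply, Finset.disjoint_left]
      intro p hp1 hp2
      simp only [Finset.mem_insert, Finset.mem_singleton] at hp1 hp2
      rcases Nat.lt_or_ge q1 q2 with hlt | hge
      · have := hsep h1 h2 hlt; omega
      · have hlt : q2 < q1 := by omega
        have := hsep h2 h1 hlt; omega
  have hBadsub : Bad ⊆ NV := by
    intro p hp
    rw [hBad, Finset.mem_biUnion] at hp
    obtain ⟨q, hqQ, hpm⟩ := hp
    rw [hQdef, mem_fil] at hqQ
    obtain ⟨hqV, q', hq'V, hqq'⟩ := hqQ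
    have hsep' := hsep hqV hq'V hqq'
    have hq'len : q' < len := Finset.mem_range.1 (fil_subset hq'V)
    simp only [Finset.mem_insert, Finset.mem_singleton] at hpm
    have hplen : p < len := by omega
    have hs : R[p]? = some R[p] := List.getElem?_eq_getElem hplen
    rw [hNVmem]
    refine ⟨R[p], hs, fun hcon => ?_⟩
    obtain ⟨c₀, hq0⟩ := hVmem.1 hqV
    obtain ⟨hA, hB⟩ := hC1 q c₀ hq0
    have hpv : R[p]? = some (v, R[p].2) := by
      rw [hs]
      congr 1
      exact Prod.ext hcon rfl
    rcases hpm with he | he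
    · exact hA R[p].2 (by rw [← he]; exact hpv)
    · exact hB R[p].2 (by rw [← he]; exact hpv)
  have hSsub : {p : ℕ | SavedForR G order v R p} ⊆ ↑(NV \ Bad) := by
    intro p hp
    obtain ⟨⟨w, hwN, cw, hcw⟩, hdisj⟩ := hp
    have hwv : w ≠ v := (G.ne_of_adj hwN.1).symm
    rw [Finset.coe_sdiff]
    refine ⟨hNVmem.2 ⟨(w, cw), hcw, hwv⟩, fun hpB => ?_⟩
    rw [hBad, Finset.mem_coe, Finset.mem_biUnion] at hpB
    obtain ⟨q, hqQ, hpm⟩ := hpB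
    rw [hQdef, mem_fil] at hqQ
    obtain ⟨hqV, q', hq'V, hqq'⟩ := hqQ
    have hsep' := hsep hqV hq'V hqq'
    simp only [Finset.mem_insert, Finset.mem_singleton] at hpm
    rcases hdisj with h | h | h
    · exact h q (by omega) (hVmem.1 hqV)
    · exact h q' (by omega) (hVmem.1 hq'V)
    · exact h q (by omega) (by omega) (hVmem.1 hqV)
  have hncard : {p : ℕ | SavedForR G order v R p}.ncard ≤ (NV \ Bad).card := by
    have := Set.ncard_le_ncard hSsub (Finset.finite_toSet _)
    rwa [Set.ncard_coe_finset] at this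
  have hsdiff : (NV \ Bad).card = NV.card - Bad.card := Finset.card_sdiff_of_subset hBadsub
  have hBadle : Bad.card ≤ NV.card := Finset.card_le_card hBadsub
  rw [hc, hm]
  omega

end Aux5

section Aux6
set_option linter.unusedSectionVars false
set_option maxHeartbeats 1000000

variable {G : SimpleGraph V}

lemma BCR_extract {α β : V → Fin 5} {v : V} {post : List V} (NC : Set V) :
    ∀ (pre : List V) (S : List (V × Fin 5)), BCR G α β (pre ++ v :: post) S →
    (∀ u ∈ pre, u ∉ NC) →
    ∃ T' T, BCR G α β post T' ∧ LBC G post v (β v) α T' T ∧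
      restrict NC S = restrict NC T := by
  intro pre
  induction pre with
  | nil =>
    intro S h _
    cases h with
    | cons hS' hL => exact ⟨_, S, hS', hL, rfl⟩
  | cons u pre ih =>
    intro S h hpre
    cases h with
    | cons hS' hL =>
      obtain ⟨T', T, h1, h2, h3⟩ := ih _ hS' (fun x hx => hpre x (List.mem_cons_of_mem _ hx))
      refine ⟨T', T, h1, h2, ?_⟩
      rw [← h3]
      unfold restrict
      exact LBC_filter hL _ (fun c => by
        exact @decide_eq_false _ (Classical.propDecidable _)
          (hpre u (List.mem_cons_self)))

end Aux6
/-- Let `S` be a best choice recoloring of `G` and `v` a vertex of `G`.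
If `r` is the number of steps of `S` saved for `v` and `m = Σ_{w ∈ N⁺(v)} |S_{|w}|` (the
length of `S_{|N⁺(v)}`), then `2 · |S_{|v}| ≤ 2 − r + 2 · ⌈m / 2⌉` (in `ℤ`, where
`⌈m / 2⌉ = (m + 1) / 2` by natural division). -/
theorem statement_4 {V : Type*} [Fintype V] [DecidableEq V] (G : SimpleGraph V)
    (order : List V) (hnd : order.Nodup) (hall : ∀ x : V, x ∈ order)
    (hpeo : IsPEOList G order)
    (α β : V → Fin 5) (hα : IsProperColoring G α) (hβ : IsProperColoring G β)
    (S : List (V × Fin 5)) (hS : BCR G α β order S)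
    (v : V) (r m : ℕ)
    (hr : r = Set.ncard {i : ℕ | SavedFor G order S v i})
    (hm : m = (restrict (NPlus G order v) S).length) :
    (2 * recolCount S v : ℤ) ≤ 2 - (r : ℤ) + 2 * (((m + 1) / 2 : ℕ) : ℤ) := by
  set N : Set V := NPlus G order v with hN
  set NC : Set V := NPlusC G order v with hNC
  have hNsubNC : N ⊆ NC := fun x hx => Set.mem_insert_of_mem _ hx
  have hvNC : v ∈ NC := Set.mem_insert _ _
  have hvN : v ∉ N := fun hx => G.loopless.irrefl v hx.1
  -- decompose the order around v
  obtain ⟨pre, post, horder⟩ := List.append_of_mem (hall v)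
  rw [horder] at hnd
  obtain ⟨hndpre, hndrest, hdisj⟩ := List.nodup_append'.1 hnd
  obtain ⟨hvpost, hndpost⟩ := List.nodup_cons.1 hndrest
  have hvpre : v ∉ pre := fun hx => hdisj hx (List.mem_cons_self)
  -- indexOf facts
  have hidxv : order.idxOf v = pre.length := by
    rw [horder, List.idxOf_append_of_notMem hvpre, List.idxOf_cons_self]
    omega
  have hidxpre : ∀ u ∈ pre, order.idxOf u < pre.length := by
    intro u hu
    rw [horder, List.idxOf_append_of_mem hu]
    exact List.idxOf_lt_length_iff.2 hu
  have hidxpost : ∀ x ∈ post, pre.length < order.idxOf x := by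
    intro x hx
    have hxpre : x ∉ pre := fun hc => hdisj hc (List.mem_cons_of_mem _ hx)
    have hxv : x ≠ v := fun he => hvpost (he ▸ hx)
    rw [horder, List.idxOf_append_of_notMem hxpre, List.idxOf_cons_ne _ (Ne.symm hxv)]
    omega
  have hNCpre : ∀ u ∈ pre, u ∉ NC := by
    intro u hu hmem
    rcases Set.mem_insert_iff.1 hmem with he | hmN
    · exact hvpre (he ▸ hu)
    · have h1 := hmN.2
      have h2 := hidxpre u hu
      rw [hidxv] at h1
      omega
  obtain ⟨T', T, hT', hLBC, hres⟩ := BCR_extract NC pre S (horder ▸ hS) hNCpre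
  -- hypotheses for the main structural lemma
  have hH2 : ∀ x ∈ post, G.Adj v x → x ∈ N := by
    intro x hx hadj
    refine ⟨hadj, ?_⟩
    rw [hidxv]
    exact hidxpost x hx
  have hH1 : ∀ s ∈ T', s.1 ≠ v := fun s hs he => hvpost (he ▸ BCR_steps hT' s hs)
  have hH2' : ∀ s ∈ T', s.1 ∈ post := BCR_steps hT'
  have hH3 : ∃ x₁ x₂ : V, ∀ x ∈ post, G.Adj v x → x = x₁ ∨ x = x₂ := by
    have hpeo' : IsPEOList G (v :: post) := IsPEOList_suffix (horder ▸ hpeo)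
    exact cover_of_no3 hpeo'.1
  have hH4 : ∀ w, G.Adj v w → w ∈ post → lastColor α T' w ≠ β v := by
    intro w hadj hw he
    rw [← applySteps_eq_lastColor, BCR_applySteps hT' hndpost w hw] at he
    exact hβ hadj he.symm
  have hC1T : C1v v (restrict NC T) := main_C1 hH2 hH3 hLBC hH1 hH2' hH4
  have hC1 : C1v v (restrict NC S) := by rw [hres]; exact hC1T
  set R : List (V × Fin 5) := restrict NC S with hR
  -- bridge : recolCount S v
  have hcR : recolCount S v = (R.filter (fun s => decide (s.1 = v))).length := by
    unfold recolCount
    congr 1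
    rw [hR]
    unfold restrict
    rw [List.filter_filter]
    apply List.filter_congr
    intro s _
    by_cases hsv : s.1 = v
    · have hd : @decide (s.1 ∈ NC) (Classical.propDecidable _) = true :=
        @decide_eq_true _ (Classical.propDecidable _) (hsv ▸ hvNC)
      simp [hsv, hd]
    · simp [hsv]
  -- bridge : m
  have hmR : m = (R.filter (fun s => decide (s.1 ≠ v))).length := by
    rw [hm]
    have e1 : restrict N S = R.filter (fun s => @decide (s.1 ∈ N) (Classical.propDecidable _)) := by
      rw [hR]
      unfold restrict
      rw [List.filter_filter]
      apply List.filter_congr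
      intro s _
      by_cases hsN : s.1 ∈ N
      · have hd1 : @decide (s.1 ∈ N) (Classical.propDecidable _) = true :=
          @decide_eq_true _ (Classical.propDecidable _) hsN
        have hd2 : @decide (s.1 ∈ NC) (Classical.propDecidable _) = true :=
          @decide_eq_true _ (Classical.propDecidable _) (hNsubNC hsN)
        simp [hd1, hd2]
      · have hd1 : @decide (s.1 ∈ N) (Classical.propDecidable _) = false :=
          @decide_eq_false _ (Classical.propDecidable _) hsN
        simp [hd1]
    rw [e1]
    congr 1
    apply List.filter_congr
    intro s hs
    have hsNC : s.1 ∈ NC := (mem_restrict hs).2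
    refine decide_eq_decide.2 ?_
    constructor
    · intro hsN he
      exact hvN (he ▸ hsN)
    · intro hne
      rcases Set.mem_insert_iff.1 hsNC with he | hmN
      · exact absurd he hne
      · exact hmN
  -- bridge : r
  have hrR : r ≤ {p : ℕ | SavedForR G order v R p}.ncard := by
    rw [hr]
    set SavedS := {i : ℕ | SavedFor G order S v i} with hSavedS
    have hinj : Set.InjOn (posIn NC S) SavedS := by
      intro i hi j hj he
      by_contra hne
      rcases Nat.lt_or_ge i j with hlt | hge
      · obtain ⟨⟨w, hwN, c, hc⟩, _⟩ := hi
        exact absurd he (Nat.ne_of_lt (posIn_lt hlt hc (hNsubNC hwN)))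
      · have hlt : j < i := by omega
        obtain ⟨⟨w, hwN, c, hc⟩, _⟩ := hj
        exact absurd he.symm (Nat.ne_of_lt (posIn_lt hlt hc (hNsubNC hwN)))
    have himg : (posIn NC S) '' SavedS ⊆ {p : ℕ | SavedForR G order v R p} := by
      rintro p ⟨i, hi, rfl⟩
      exact hi.2
    have hfin : {p : ℕ | SavedForR G order v R p}.Finite := by
      apply (Set.finite_lt_nat R.length).subset
      rintro p ⟨⟨w, _, hw⟩, _⟩
      exact recolorsAt_lt hw
    calc SavedS.ncard = ((posIn NC S) '' SavedS).ncard :=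
          (Set.ncard_image_of_injOn hinj).symm
      _ ≤ _ := Set.ncard_le_ncard himg hfin
  have hcount := count_core G order v hC1
  have hkey : r + 2 * recolCount S v ≤ m + 2 := by
    rw [hcR, hmR]
    omega
  have hdiv : m ≤ 2 * ((m + 1) / 2) := by omega
  omega
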